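/- arXiv:1406.2084 — 2 statements merged into one kernel-verified Lean document; each statement's English description precedes it below -/
import Mathlib

section
/- Let P be any set of pairs (κ,μ) of cardinals, each coordinate of each pair being either 1 or an infinite regular cardinal. Then there is a linear order L with a least element such that for every (κ,μ) ∈ P there is an ultrafilter U on Intalg L with (U,⊇) ≡_T (κ×μ,≤), where κ×μ carries the coordinatewise order and each cardinal its ordinal order. -/
open Cardinal
open scoped Classical

/-- A subset `X` of a preorder is cofinal if every element has an upper bound in `X`. -/
def TCofinal {P : Type*} [Preorder P] (X : Set P) : Prop :=
  ∀ p : P, ∃ x ∈ X, p ≤ x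

/-- A map is cofinal if it sends cofinal sets to cofinal sets. -/
def TCofinalMap {P Q : Type*} [Preorder P] [Preorder Q] (f : P → Q) : Prop :=
  ∀ X : Set P, TCofinal X → TCofinal (f '' X)

/-- `P ≤_T Q`: there is a cofinal map from `Q` to `P`. -/
def TukeyLE (P Q : Type*) [Preorder P] [Preorder Q] : Prop :=
  ∃ f : Q → P, TCofinalMap f

/-- Tukey equivalence. -/
def TukeyEquiv (P Q : Type*) [Preorder P] [Preorder Q] : Prop :=
  TukeyLE P Q ∧ TukeyLE Q P

/-- An ultrafilter on a Boolean algebra `B` of subsets of `X` (a field of sets):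
a subset of `B` omitting `∅`, closed under intersection, upward closed in `B`, and
containing `s` or `sᶜ` for each `s ∈ B`; regarded as the partial order `(U,⊇)`. -/
structure SetUltrafilter {X : Type*} (B : Set (Set X)) where
  carrier : Set (Set X)
  subset_alg : carrier ⊆ B
  empty_not_mem : ∅ ∉ carrier
  inter_mem : ∀ a ∈ carrier, ∀ b ∈ carrier, a ∩ b ∈ carrier
  up_closed : ∀ a ∈ carrier, ∀ b ∈ B, a ⊆ b → b ∈ carrier
  mem_or_compl_mem : ∀ b ∈ B, b ∈ carrier ∨ bᶜ ∈ carrier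

/-- The Boolean subalgebra of the powerset algebra of `X` generated by a family `G`. -/
def genBoolAlg {X : Type*} (G : Set (Set X)) : Set (Set X) :=
  ⋂₀ {B : Set (Set X) | G ⊆ B ∧ ∅ ∈ B ∧ (∀ s ∈ B, sᶜ ∈ B) ∧ (∀ s ∈ B, ∀ t ∈ B, s ∩ t ∈ B)}

/-- The interval algebra of a linear order `L`: the subalgebra of the powerset algebra
generated by the half-lines `[a,→)`. -/
def intalg (L : Type*) [LinearOrder L] : Set (Set L) :=
  genBoolAlg {s : Set L | ∃ a : L, s = Set.Ici a}

/-- The cofinality of a subset `C` of a preorder: the least cardinality of a cofinal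
subset of `C`. -/
noncomputable def setCof {L : Type*} [Preorder L] (C : Set L) : Cardinal :=
  sInf {c : Cardinal | ∃ D : Set L, D ⊆ C ∧ c = #↥D ∧ ∀ x ∈ C, ∃ y ∈ D, x ≤ y}

/-- The coinitiality of a subset `X` of a preorder: the least cardinality of a coinitial
subset of `X`, with the convention that the coinitiality of `∅` is `1`. -/
noncomputable def setCoi {L : Type*} [Preorder L] (X : Set L) : Cardinal :=
  if X = ∅ then 1
  else sInf {c : Cardinal | ∃ D : Set L, D ⊆ X ∧ c = #↥D ∧ ∀ x ∈ X, ∃ y ∈ D, y ≤ x}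

section Aux
variable {L : Type*} [LinearOrder L]

lemma Ici_mem_intalg (a : L) : Set.Ici a ∈ intalg L :=
  Set.mem_sInter.2 fun _ hB => hB.1 ⟨a, rfl⟩

lemma empty_mem_intalg : (∅ : Set L) ∈ intalg L :=
  Set.mem_sInter.2 fun _ hB => hB.2.1

lemma compl_mem_intalg {s : Set L} (hs : s ∈ intalg L) : sᶜ ∈ intalg L :=
  Set.mem_sInter.2 fun B hB => hB.2.2.1 s (Set.mem_sInter.1 hs B hB)

lemma inter_mem_intalg {s t : Set L} (hs : s ∈ intalg L) (ht : t ∈ intalg L) :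
    s ∩ t ∈ intalg L :=
  Set.mem_sInter.2 fun B hB =>
    hB.2.2.2 s (Set.mem_sInter.1 hs B hB) t (Set.mem_sInter.1 ht B hB)

lemma Ico_eq_Ici_inter_compl (a b : L) : Set.Ico a b = Set.Ici a ∩ (Set.Ici b)ᶜ := by
  ext x
  simp [Set.mem_Ico, Set.mem_Ici, not_le, and_comm]

lemma Ico_mem_intalg (a b : L) : Set.Ico a b ∈ intalg L := by
  rw [Ico_eq_Ici_inter_compl]
  exact inter_mem_intalg (Ici_mem_intalg a) (compl_mem_intalg (Ici_mem_intalg b))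

/-- The carrier of the ultrafilter determined by a cut `(A, Aᶜ)`. -/
def cutCarrier (A : Set L) : Set (Set L) :=
  {s | s ∈ intalg L ∧ ∃ a ∈ A, ∃ b ∈ Aᶜ, Set.Ico a b ⊆ s}

lemma lt_of_cut {A : Set L} (hA : ∀ ⦃x y : L⦄, x ≤ y → y ∈ A → x ∈ A)
    {a b : L} (ha : a ∈ A) (hb : b ∈ Aᶜ) : a < b :=
  lt_of_not_ge fun h => hb (hA h ha)

lemma intalg_dichotomy (A : Set L)
    (hA0 : A.Nonempty) (hA1 : Aᶜ.Nonempty)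
    {s : Set L} (hs : s ∈ intalg L) :
    ∃ a ∈ A, ∃ b ∈ Aᶜ, Set.Ico a b ⊆ s ∨ Set.Ico a b ⊆ sᶜ := by
  have key := Set.mem_sInter.1 hs
    {t | ∃ a ∈ A, ∃ b ∈ Aᶜ, Set.Ico a b ⊆ t ∨ Set.Ico a b ⊆ tᶜ} ?_
  · exact key
  refine ⟨?_, ?_, ?_, ?_⟩
  · rintro _ ⟨c, rfl⟩
    by_cases hc : c ∈ A
    · exact ⟨c, hc, hA1.some, hA1.some_mem, Or.inl Set.Ico_subset_Ici_self⟩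
    · exact ⟨hA0.some, hA0.some_mem, c, hc,
        Or.inr fun x hx hc' => not_le.2 hx.2 hc'⟩
  · exact ⟨hA0.some, hA0.some_mem, hA1.some, hA1.some_mem, Or.inr (by simp)⟩
  · rintro t ⟨a, ha, b, hb, h | h⟩
    · exact ⟨a, ha, b, hb, Or.inr (by simpa using h)⟩
    · exact ⟨a, ha, b, hb, Or.inl h⟩
  · rintro t ⟨a, ha, b, hb, hst⟩ t' ⟨a', ha', b', hb', hst'⟩
    have hmax : max a a' ∈ A := by rcases max_choice a a' with h | h <;> rw [h] <;> assumption
    have hmin : min b b' ∈ Aᶜ := by rcases min_choice b b' with h | h <;> rw [h] <;> assumption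
    have h1 : Set.Ico (max a a') (min b b') ⊆ Set.Ico a b :=
      Set.Ico_subset_Ico (le_max_left _ _) (min_le_left _ _)
    have h2 : Set.Ico (max a a') (min b b') ⊆ Set.Ico a' b' :=
      Set.Ico_subset_Ico (le_max_right _ _) (min_le_right _ _)
    rcases hst with h | h
    · rcases hst' with h' | h'
      · exact ⟨_, hmax, _, hmin, Or.inl (Set.subset_inter (h1.trans h) (h2.trans h'))⟩
      · exact ⟨_, hmax, _, hmin, Or.inr ((h2.trans h').trans
          (Set.compl_subset_compl.2 Set.inter_subset_right))⟩
    · exact ⟨_, hmax, _, hmin, Or.inr ((h1.trans h).trans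
        (Set.compl_subset_compl.2 Set.inter_subset_left))⟩

/-- The ultrafilter on `intalg L` determined by a cut. -/
def cutUF (A : Set L) (hA : ∀ ⦃x y : L⦄, x ≤ y → y ∈ A → x ∈ A)
    (hA0 : A.Nonempty) (hA1 : Aᶜ.Nonempty) : SetUltrafilter (intalg L) where
  carrier := cutCarrier A
  subset_alg := fun _ hs => hs.1
  empty_not_mem := by
    rintro ⟨-, a, ha, b, hb, hsub⟩
    exact hsub ⟨le_refl a, lt_of_cut hA ha hb⟩
  inter_mem := by
    rintro s ⟨hs, a, ha, b, hb, hsub⟩ t ⟨ht, a', ha', b', hb', hsub'⟩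
    refine ⟨inter_mem_intalg hs ht, max a a', ?_, min b b', ?_, ?_⟩
    · rcases max_choice a a' with h | h <;> rw [h] <;> assumption
    · rcases min_choice b b' with h | h <;> rw [h] <;> assumption
    · exact Set.subset_inter
        ((Set.Ico_subset_Ico (le_max_left _ _) (min_le_left _ _)).trans hsub)
        ((Set.Ico_subset_Ico (le_max_right _ _) (min_le_right _ _)).trans hsub')
  up_closed := by
    rintro s ⟨hs, a, ha, b, hb, hsub⟩ t ht hst
    exact ⟨ht, a, ha, b, hb, hsub.trans hst⟩
  mem_or_compl_mem := by
    intro s hs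
    obtain ⟨a, ha, b, hb, h | h⟩ := intalg_dichotomy A hA0 hA1 hs
    · exact Or.inl ⟨hs, a, ha, b, hb, h⟩
    · exact Or.inr ⟨compl_mem_intalg hs, a, ha, b, hb, h⟩

lemma tukey_cut {α β : Type*} [LinearOrder α] [LinearOrder β]
    [Nonempty α] [Nonempty β] (A : Set L)
    (hA : ∀ ⦃x y : L⦄, x ≤ y → y ∈ A → x ∈ A)
    (i : α → L) (j : β → L) (hi : StrictMono i) (hj : StrictAnti j)
    (hiA : ∀ a, i a ∈ A) (hjB : ∀ b, j b ∈ Aᶜ)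
    (hcof : ∀ x ∈ A, ∃ a, x ≤ i a) (hcoi : ∀ x ∈ Aᶜ, ∃ b, j b ≤ x) :
    TukeyEquiv ((↥(cutCarrier A))ᵒᵈ) (α × β) := by
  classical
  have key : ∀ s ∈ cutCarrier A, ∃ ab : α × β, Set.Ico (i ab.1) (j ab.2) ⊆ s := by
    rintro s ⟨-, a0, ha0, b0, hb0, hsub⟩
    obtain ⟨a, haa⟩ := hcof a0 ha0
    obtain ⟨b, hbb⟩ := hcoi b0 hb0
    exact ⟨(a, b), (Set.Ico_subset_Ico haa hbb).trans hsub⟩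
  have hIcoMem : ∀ ab : α × β, Set.Ico (i ab.1) (j ab.2) ∈ cutCarrier A :=
    fun ab => ⟨Ico_mem_intalg _ _, i ab.1, hiA _, j ab.2, hjB _, subset_rfl⟩
  let g : α × β → (↥(cutCarrier A))ᵒᵈ :=
    fun ab => OrderDual.toDual ⟨Set.Ico (i ab.1) (j ab.2), hIcoMem ab⟩
  constructor
  · -- TukeyLE (↥(cutCarrier A))ᵒᵈ (α × β) : cofinal map g : α × β → U
    refine ⟨g, ?_⟩
    intro X hX t
    obtain ⟨ab, hab⟩ := key (OrderDual.ofDual t).1 (OrderDual.ofDual t).2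
    obtain ⟨ab', hab'X, hle⟩ := hX ab
    refine ⟨g ab', ⟨ab', hab'X, rfl⟩, ?_⟩
    have hle1 : ab.1 ≤ ab'.1 := (Prod.le_def.1 hle).1
    have hle2 : ab.2 ≤ ab'.2 := (Prod.le_def.1 hle).2
    show Set.Ico (i ab'.1) (j ab'.2) ⊆ (OrderDual.ofDual t).1
    exact (Set.Ico_subset_Ico (hi.monotone hle1) (hj.antitone hle2)).trans hab
  · -- TukeyLE (α × β) (↥(cutCarrier A))ᵒᵈ : cofinal map f : U → α × β
    refine ⟨fun t => Classical.choose (key _ (OrderDual.ofDual t).2), ?_⟩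
    intro X hX ab
    obtain ⟨t, htX, hget⟩ := hX (g ab)
    have hspec := Classical.choose_spec (key _ (OrderDual.ofDual t).2)
    set ab' := Classical.choose (key _ (OrderDual.ofDual t).2) with hab'
    have hget' : (OrderDual.ofDual t).1 ⊆ Set.Ico (i ab.1) (j ab.2) := hget
    have hne : i ab'.1 < j ab'.2 := lt_of_cut hA (hiA _) (hjB _)
    obtain ⟨h1, h2⟩ := (Set.Ico_subset_Ico_iff hne).1 (hspec.trans hget')
    exact ⟨ab', ⟨t, htX, rfl⟩, Prod.le_def.2 ⟨hi.le_iff_le.1 h1, hj.le_iff_ge.1 h2⟩⟩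

end Aux

universe u

/-- For any set `P` of pairs of cardinals, each coordinate being `1` or an
infinite regular cardinal, there is a linear order `L` with a least element such that
for every `(κ,μ) ∈ P` some ultrafilter `U` on `Intalg L` satisfies
`(U,⊇) ≡_T (κ×μ,≤)` (coordinatewise order, each cardinal with its ordinal order). -/
theorem stmt10 (P : Set (Cardinal.{u} × Cardinal.{u}))
    (hP : ∀ p ∈ P, (p.1 = 1 ∨ (ℵ₀ ≤ p.1 ∧ p.1.IsRegular)) ∧
      (p.2 = 1 ∨ (ℵ₀ ≤ p.2 ∧ p.2.IsRegular))) :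
    ∃ (L : Type (u + 1)) (inst : LinearOrder L),
      letI := inst
      (∃ bot : L, ∀ x : L, bot ≤ x) ∧
        ∀ p ∈ P, ∃ U : SetUltrafilter (intalg L),
          TukeyEquiv ((↥U.carrier)ᵒᵈ) (p.1.ord.ToType × p.2.ord.ToType) := by
  classical
  letI : LinearOrder (Lex ↥P) := IsWellOrder.linearOrder WellOrderingRel
  refine ⟨WithBot (Σₗ (q : Lex ↥P), ((ofLex q).1.1.ord.ToType ⊕ₗ ((ofLex q).1.2.ord.ToType)ᵒᵈ)),
    inferInstance, ⟨⊥, fun x => bot_le⟩, ?_⟩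
  intro p hp
  set L : Type (u+1) :=
    WithBot (Σₗ (q : Lex ↥P), ((ofLex q).1.1.ord.ToType ⊕ₗ ((ofLex q).1.2.ord.ToType)ᵒᵈ)) with hLdef
  have hp1 : p.1 ≠ 0 := by
    rcases (hP p hp).1 with h | h
    · rw [h]; exact one_ne_zero
    · exact h.2.pos.ne'
  have hp2 : p.2 ≠ 0 := by
    rcases (hP p hp).2 with h | h
    · rw [h]; exact one_ne_zero
    · exact h.2.pos.ne'
  have hα : Nonempty p.1.ord.ToType :=
    Ordinal.toType_nonempty_iff_ne_zero.2 (by simpa [Cardinal.ord_eq_zero] using hp1)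
  have hβ : Nonempty p.2.ord.ToType :=
    Ordinal.toType_nonempty_iff_ne_zero.2 (by simpa [Cardinal.ord_eq_zero] using hp2)
  let pp : Lex ↥P := toLex ⟨p, hp⟩
  let i : p.1.ord.ToType → L := fun a =>
    WithBot.some (toLex ⟨pp, toLex (Sum.inl a)⟩)
  let j : p.2.ord.ToType → L := fun b =>
    WithBot.some (toLex ⟨pp, toLex (Sum.inr (OrderDual.toDual b))⟩)
  let A : Set L := {x | ∀ b, x < j b}
  have hA : ∀ ⦃x y : L⦄, x ≤ y → y ∈ A → x ∈ A :=
    fun x y hxy hy b => lt_of_le_of_lt hxy (hy b)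
  have hiA : ∀ a, i a ∈ A := by
    intro a b
    refine WithBot.coe_lt_coe.2 (Sigma.Lex.lt_def.2 (Or.inr ⟨rfl, ?_⟩))
    exact Sum.Lex.inl_lt_inr _ _
  have hjB : ∀ b, j b ∈ Aᶜ := fun b h => lt_irrefl _ (h b)
  have hi : StrictMono i := by
    intro a a' haa
    exact WithBot.coe_lt_coe.2 (Sigma.Lex.lt_def.2 (Or.inr ⟨rfl,
      Sum.Lex.inl_lt_inl_iff.2 haa⟩))
  have hj : StrictAnti j := by
    intro b b' hbb
    exact WithBot.coe_lt_coe.2 (Sigma.Lex.lt_def.2 (Or.inr ⟨rfl,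
      Sum.Lex.inr_lt_inr_iff.2 hbb⟩))
  have hcof : ∀ x ∈ A, ∃ a, x ≤ i a := by
    intro x hx
    induction x using WithBot.recBotCoe with
    | bot => exact ⟨Classical.arbitrary _, bot_le⟩
    | coe y =>
      obtain ⟨q, z⟩ := y
      rcases lt_trichotomy q pp with hq | hq | hq
      · exact ⟨Classical.arbitrary _,
          WithBot.coe_le_coe.2 (Sigma.Lex.le_def.2 (Or.inl hq))⟩
      · subst hq
        rcases h : ofLex z with a | d
        · refine ⟨a, WithBot.coe_le_coe.2 (Sigma.Lex.le_def.2 (Or.inr ⟨rfl, ?_⟩))⟩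
          show z ≤ toLex (Sum.inl a)
          rw [show z = toLex (Sum.inl a) from h]
        · exfalso
          have := hx (OrderDual.ofDual d)
          have hz : z = toLex (Sum.inr d) := h
          rw [hz] at this
          exact lt_irrefl _ (WithBot.coe_lt_coe.1 this)
      · exfalso
        have := hx (Classical.arbitrary _)
        have hlt := WithBot.coe_lt_coe.1 this
        rcases Sigma.Lex.lt_def.1 hlt with h | ⟨h, -⟩
        · exact absurd h (asymm hq)
        · exact absurd h (ne_of_gt hq)
  have hcoi : ∀ x ∈ Aᶜ, ∃ b, j b ≤ x := by
    intro x hx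
    have : ¬ ∀ b, x < j b := hx
    push_neg at this
    obtain ⟨b, hb⟩ := this
    exact ⟨b, (not_lt (α := L)).1 hb⟩
  have hA0 : A.Nonempty := ⟨⊥, fun b => WithBot.bot_lt_coe _⟩
  have hA1 : Aᶜ.Nonempty := ⟨j (Classical.arbitrary _), hjB _⟩
  exact ⟨cutUF A hA hA0 hA1, tukey_cut A hA i j hi hj hiA hjB hcof hcoi⟩
end

section
/- Let T be a tree with a least element (a single root), let U be an ultrafilter on Treealg T, and let C = {t ∈ T : T↑t ∈ U} be its corresponding initial chain. Let imm(C) be the set of immediate successors of C, i.e., the minimal elements of {s ∈ T : s > c for all c ∈ C}, and let μ = |imm(C)|. Then (U,⊇) ≡_T (cf C × ∏^w_{β<μ}{0,1}, ≤), where ∏^w_{β<μ}{0,1} is the set of finitely supported functions from μ to {0,1} ordered pointwise and the product is ordered coordinatewise. -/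
open Cardinal



/-- The (pseudo-)tree algebra of a partial order `T`: the subalgebra of the powerset
algebra of `T` generated by the cones `T↑t = {s : s ≥ t}`. -/
def treealg (T : Type*) [PartialOrder T] : Set (Set T) :=
  genBoolAlg {s : Set T | ∃ t : T, s = Set.Ici t}

/-- The weak product `∏^w_{i ∈ I} κ i`: finitely supported choices of an ordinal
`f i < κ i` in each coordinate, ordered pointwise. -/
def WeakProd {I : Type*} (κ : I → Cardinal) : Type _ :=
  {f : I → Ordinal // (∀ i, f i < (κ i).ord) ∧ {i | f i ≠ 0}.Finite}

noncomputable instance {I : Type*} (κ : I → Cardinal) : PartialOrder (WeakProd κ) :=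
  Subtype.partialOrder _

/-- The set of immediate successors of an initial chain `C`: the minimal elements of
`{s : s > c for all c ∈ C}`. -/
def immSucc {T : Type*} [PartialOrder T] (C : Set T) : Set T :=
  {s : T | (∀ c ∈ C, c < s) ∧ ∀ s' : T, (∀ c ∈ C, c < s') → s' ≤ s → s' = s}

section Gen
variable {X : Type*} (G : Set (Set X))

lemma gen_mem_of_mem {s : Set X} (h : s ∈ G) : s ∈ genBoolAlg G := by
  intro B hB; exact hB.1 h

lemma gen_empty : (∅ : Set X) ∈ genBoolAlg G := fun B hB => hB.2.1

lemma gen_compl {s : Set X} (h : s ∈ genBoolAlg G) : sᶜ ∈ genBoolAlg G :=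
  fun B hB => hB.2.2.1 s (h B hB)

lemma gen_inter {s t : Set X} (hs : s ∈ genBoolAlg G) (ht : t ∈ genBoolAlg G) :
    s ∩ t ∈ genBoolAlg G := fun B hB => hB.2.2.2 s (hs B hB) t (ht B hB)

lemma gen_univ : (Set.univ : Set X) ∈ genBoolAlg G := by
  have := gen_compl G (gen_empty G); simpa using this

lemma gen_induction (P : Set X → Prop) (hG : ∀ s ∈ G, P s) (h0 : P ∅)
    (hc : ∀ s, P s → P sᶜ) (hi : ∀ s, P s → ∀ t, P t → P (s ∩ t)) :
    ∀ s ∈ genBoolAlg G, P s := by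
  intro s hs
  exact hs {u | P u} ⟨hG, h0, hc, hi⟩
end Gen
section Tree
variable {T : Type*} [PartialOrder T] [OrderBot T]
  (htree : ∀ t : T, IsChain (· ≤ ·) {s : T | s ≤ t} ∧
      {s : T | s ≤ t}.WellFoundedOn (· < ·))

/-- basic cone-difference set -/
def btree (c : T) (F : Finset T) : Set T := Set.Ici c ∩ ⋂ a ∈ F, (Set.Ici a)ᶜ

lemma mem_btree {c : T} {F : Finset T} {x : T} :
    x ∈ btree c F ↔ c ≤ x ∧ ∀ a ∈ F, ¬ a ≤ x := by
  simp [btree]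

lemma btree_mono {c c' : T} {F F' : Finset T} (hc : c ≤ c') (hF : F ⊆ F') :
    btree c' F' ⊆ btree c F := by
  intro x hx
  rw [mem_btree] at hx ⊢
  exact ⟨le_trans hc hx.1, fun a ha => hx.2 a (hF ha)⟩

lemma btree_mem_treealg (c : T) (F : Finset T) : btree c F ∈ treealg T := by
  classical
  unfold btree
  apply gen_inter
  · exact gen_mem_of_mem _ ⟨c, rfl⟩
  · induction F using Finset.induction with
    | empty => simpa using gen_univ _
    | @insert a s hnot ih =>
        rw [Finset.set_biInter_insert a s fun b => (Set.Ici b)ᶜ]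
        exact gen_inter _ (gen_compl _ (gen_mem_of_mem _ ⟨_, rfl⟩)) ih

include htree in
lemma tree_comparable {s t x : T} (hs : s ≤ x) (ht : t ≤ x) : s ≤ t ∨ t ≤ s := by
  rcases (htree x).1.total hs ht with h | h
  · exact Or.inl h
  · exact Or.inr h

include htree in
lemma tree_cones_disjoint {s t : T} (h : ¬ s ≤ t) (h' : ¬ t ≤ s) :
    Set.Ici s ∩ Set.Ici t = ∅ := by
  ext x; simp only [Set.mem_inter_iff, Set.mem_Ici, Set.mem_empty_iff_false, iff_false]
  rintro ⟨h1, h2⟩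
  rcases tree_comparable htree h1 h2 with h3 | h3 <;> [exact h h3; exact h' h3]

include htree in
lemma btree_inter (c c' : T) (F F' : Finset T) :
    ∃ c'' F'', btree c F ∩ btree c' F' = btree c'' F'' := by
  classical
  by_cases h : c ≤ c'
  · refine ⟨c', F ∪ F', ?_⟩
    ext x; rw [Set.mem_inter_iff, mem_btree, mem_btree, mem_btree]
    constructor
    · rintro ⟨⟨h1, h2⟩, h3, h4⟩
      exact ⟨h3, fun a ha => by rcases Finset.mem_union.1 ha with h' | h'; exacts [h2 a h', h4 a h']⟩
    · rintro ⟨h1, h2⟩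
      exact ⟨⟨le_trans h h1, fun a ha => h2 a (Finset.mem_union_left _ ha)⟩,
        h1, fun a ha => h2 a (Finset.mem_union_right _ ha)⟩
  · by_cases h' : c' ≤ c
    · refine ⟨c, F ∪ F', ?_⟩
      ext x; rw [Set.mem_inter_iff, mem_btree, mem_btree, mem_btree]
      constructor
      · rintro ⟨⟨h1, h2⟩, h3, h4⟩
        exact ⟨h1, fun a ha => by rcases Finset.mem_union.1 ha with hh | hh; exacts [h2 a hh, h4 a hh]⟩
      · rintro ⟨h1, h2⟩
        exact ⟨⟨h1, fun a ha => h2 a (Finset.mem_union_left _ ha)⟩,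
          le_trans h' h1, fun a ha => h2 a (Finset.mem_union_right _ ha)⟩
    · refine ⟨c, {c}, ?_⟩
      have hd := tree_cones_disjoint htree h h'
      ext x
      simp only [Set.mem_inter_iff, mem_btree, Finset.mem_singleton]
      constructor
      · rintro ⟨⟨h1, _⟩, h3, _⟩
        exact absurd (Set.mem_inter h1 h3 : x ∈ Set.Ici c ∩ Set.Ici c') (by rw [hd]; simp)
      · rintro ⟨h1, h2⟩; exact absurd h1 (h2 c rfl)

/-- normal form: finite unions of basic sets -/
def NF (s : Set T) : Prop :=
  ∃ (ι : Type) (_ : Fintype ι) (t : ι → T) (F : ι → Finset T), s = ⋃ i, btree (t i) (F i)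

lemma NF_empty : NF (∅ : Set T) :=
  ⟨PEmpty, inferInstance, PEmpty.elim, PEmpty.elim, by simp⟩

lemma NF_btree (c : T) (F : Finset T) : NF (btree c F) :=
  ⟨PUnit, inferInstance, fun _ => c, fun _ => F, by rw [Set.iUnion_const]⟩

lemma NF_Ici (c : T) : NF (Set.Ici c) := by
  have : Set.Ici c = btree c ∅ := by simp [btree]
  rw [this]; exact NF_btree c ∅

include htree in
lemma NF_inter {s t : Set T} (hs : NF s) (ht : NF t) : NF (s ∩ t) := by
  classical
  obtain ⟨ι, hι, f, F, rfl⟩ := hs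
  obtain ⟨ι', hι', g, G, rfl⟩ := ht
  have key : ∀ p : ι × ι', ∃ c'' F'', btree (f p.1) (F p.1) ∩ btree (g p.2) (G p.2) = btree c'' F'' :=
    fun p => btree_inter htree _ _ _ _
  choose c'' F'' hc using key
  refine ⟨ι × ι', inferInstance, c'', F'', ?_⟩
  ext x
  simp only [Set.mem_inter_iff, Set.mem_iUnion]
  constructor
  · rintro ⟨⟨i, hi⟩, ⟨j, hj⟩⟩
    exact ⟨(i, j), by rw [← hc (i,j)]; exact ⟨hi, hj⟩⟩
  · rintro ⟨⟨i, j⟩, hij⟩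
    rw [← hc (i,j)] at hij
    exact ⟨⟨i, hij.1⟩, ⟨j, hij.2⟩⟩

lemma NF_union {s t : Set T} (hs : NF s) (ht : NF t) : NF (s ∪ t) := by
  obtain ⟨ι, hι, f, F, rfl⟩ := hs
  obtain ⟨ι', hι', g, G, rfl⟩ := ht
  refine ⟨ι ⊕ ι', inferInstance, Sum.elim f g, Sum.elim F G, ?_⟩
  rw [Set.iUnion_sum]; simp [Set.iUnion_union_distrib]

end Tree
section Main
variable {T : Type*} [PartialOrder T] [OrderBot T]
  (htree : ∀ t : T, IsChain (· ≤ ·) {s : T | s ≤ t} ∧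
      {s : T | s ≤ t}.WellFoundedOn (· < ·))
  (U : SetUltrafilter (treealg T))

include htree in
lemma NF_compl {s : Set T} (hs : NF s) : NF sᶜ := by
  classical
  obtain ⟨ι, hι, f, F, rfl⟩ := hs
  have hpc : ∀ i, NF (btree (f i) (F i))ᶜ := by
    intro i
    have : (btree (f i) (F i))ᶜ = btree ⊥ {f i} ∪ ⋃ a ∈ (F i), Set.Ici a := by
      ext x
      simp only [Set.mem_compl_iff, mem_btree, Set.mem_union, Set.mem_iUnion, Set.mem_Ici,
        Finset.mem_singleton, not_and, not_forall]
      constructor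
      · intro h
        by_cases hf : f i ≤ x
        · obtain ⟨a, ha, hax⟩ := h hf
          exact Or.inr ⟨a, ha, not_not.1 hax⟩
        · exact Or.inl ⟨bot_le, fun a ha => by subst ha; exact hf⟩
      · rintro (⟨-, h2⟩ | ⟨a, ha, hax⟩)
        · intro hf; exact absurd hf (h2 (f i) rfl)
        · intro _; exact ⟨a, ha, not_not.2 hax⟩
    rw [this]
    apply NF_union
    · exact NF_btree _ _
    · induction (F i) using Finset.induction with
      | empty => simpa using NF_empty
      | @insert a s hnot ih =>
          rw [Finset.set_biUnion_insert]
          exact NF_union (NF_Ici a) ih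
  have hbi : ∀ s : Finset ι, NF (⋂ i ∈ s, (btree (f i) (F i))ᶜ) := by
    intro s
    induction s using Finset.induction with
    | empty =>
        simp only [Finset.notMem_empty, Set.iInter_of_empty, Set.iInter_univ]
        have : (Set.univ : Set T) = btree ⊥ ∅ := by simp [btree]
        rw [this]; exact NF_btree _ _
    | @insert a s hnot ih =>
        rw [Finset.set_biInter_insert]
        exact NF_inter htree (hpc a) ih
  have : (⋃ i, btree (f i) (F i))ᶜ = ⋂ i ∈ (Finset.univ : Finset ι), (btree (f i) (F i))ᶜ := by
    simp [Set.compl_iUnion]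
  rw [this]; exact hbi _

include htree in
lemma treealg_NF : ∀ s ∈ treealg T, NF s := by
  apply gen_induction
  · rintro s ⟨t, rfl⟩; exact NF_Ici t
  · exact NF_empty
  · exact fun s hs => NF_compl htree hs
  · exact fun s hs t ht => NF_inter htree hs ht

/-- The initial chain of the ultrafilter. -/
def CC : Set T := {t : T | Set.Ici t ∈ U.carrier}

include U in
lemma U_univ : Set.univ ∈ U.carrier := by
  rcases U.mem_or_compl_mem Set.univ (gen_univ _) with h | h
  · exact h
  · rw [Set.compl_univ] at h; exact absurd h U.empty_not_mem

lemma U_nonempty {u : Set T} (hu : u ∈ U.carrier) : u.Nonempty := by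
  rcases Set.eq_empty_or_nonempty u with rfl | h
  · exact absurd hu U.empty_not_mem
  · exact h

lemma U_compl_mem {s : Set T} (hs : s ∈ treealg T) (h : s ∉ U.carrier) : sᶜ ∈ U.carrier := by
  rcases U.mem_or_compl_mem s hs with h' | h'
  · exact absurd h' h
  · exact h'

lemma bot_mem_CC : (⊥ : T) ∈ CC U := by
  have : Set.Ici (⊥ : T) = Set.univ := by ext x; simp
  show Set.Ici (⊥:T) ∈ U.carrier
  rw [this]; exact U_univ U

lemma CC_down {s t : T} (hst : s ≤ t) (ht : t ∈ CC U) : s ∈ CC U :=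
  U.up_closed _ ht _ (gen_mem_of_mem _ ⟨s, rfl⟩) (Set.Ici_subset_Ici.2 hst)

include htree in
lemma CC_chain {s t : T} (hs : s ∈ CC U) (ht : t ∈ CC U) : s ≤ t ∨ t ≤ s := by
  have h := U.inter_mem _ hs _ ht
  obtain ⟨x, hx⟩ := U_nonempty U h
  exact tree_comparable htree hx.1 hx.2

lemma immSucc_not_CC {a : T} (ha : a ∈ immSucc (CC U)) : a ∉ CC U :=
  fun h => lt_irrefl a (ha.1 a h)

lemma btree_mem_U {c : T} {F : Finset T} (hc : c ∈ CC U) (hF : ↑F ⊆ immSucc (CC U)) :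
    btree c F ∈ U.carrier := by
  classical
  unfold btree
  apply U.inter_mem _ hc
  induction F using Finset.induction with
  | empty => simpa using U_univ U
  | @insert a s hnot ih =>
      rw [Finset.set_biInter_insert]
      refine U.inter_mem _ ?_ _ (ih (fun x hx => hF (by simp [hx])))
      apply U_compl_mem U (gen_mem_of_mem _ ⟨a, rfl⟩)
      exact immSucc_not_CC U (hF (by simp))

lemma mem_btree_self {c : T} {F : Finset T} (hc : c ∈ CC U) (hF : ↑F ⊆ immSucc (CC U)) :
    c ∈ btree c F := by
  rw [mem_btree]
  exact ⟨le_refl c, fun a ha hac => absurd (lt_of_lt_of_le ((hF ha).1 c hc) hac) (lt_irrefl c)⟩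

lemma mem_btree_imm {c : T} {F : Finset T} (hc : c ∈ CC U) {a : T}
    (ha : a ∈ immSucc (CC U)) (haF : a ∉ F) (hF : ↑F ⊆ immSucc (CC U)) : a ∈ btree c F := by
  rw [mem_btree]
  refine ⟨le_of_lt (ha.1 c hc), fun a' ha' haa' => ?_⟩
  have : a' = a := ha.2 a' (fun c hcm => (hF ha').1 c hcm) haa'
  exact haF (this ▸ ha')

include htree in
lemma CC_finset_ub (s : Finset T) (hs : ↑s ⊆ CC U) : ∃ c ∈ CC U, ∀ x ∈ s, x ≤ c := by
  classical
  induction s using Finset.induction with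
  | empty => exact ⟨⊥, bot_mem_CC U, by simp⟩
  | @insert a s hnot ih =>
      obtain ⟨c, hc, hub⟩ := ih (fun x hx => hs (by simp [hx]))
      have ha : a ∈ CC U := hs (by simp)
      rcases CC_chain htree U ha hc with h | h
      · exact ⟨c, hc, fun x hx => by
          rcases Finset.mem_insert.1 hx with rfl | hx; exacts [h, hub x hx]⟩
      · exact ⟨a, ha, fun x hx => by
          rcases Finset.mem_insert.1 hx with rfl | hx; exacts [le_rfl, le_trans (hub x hx) h]⟩

include htree in
lemma U_pigeonhole {ι : Type} [Fintype ι] (A : ι → Set T) (hA : ∀ i, A i ∈ treealg T)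
    (hU : (⋃ i, A i) ∈ U.carrier) : ∃ i, A i ∈ U.carrier := by
  classical
  by_contra h
  push_neg at h
  have hc : ∀ i, (A i)ᶜ ∈ U.carrier := fun i => U_compl_mem U (hA i) (h i)
  have key : ∀ s : Finset ι, (⋂ i ∈ s, (A i)ᶜ) ∈ U.carrier := by
    intro s
    induction s using Finset.induction with
    | empty => simpa using U_univ U
    | @insert a s hnot ih =>
        rw [Finset.set_biInter_insert]
        exact U.inter_mem _ (hc a) _ ih
  have h2 := U.inter_mem _ hU _ (key Finset.univ)
  have : ((⋃ i, A i) ∩ ⋂ i ∈ (Finset.univ : Finset ι), (A i)ᶜ) = ∅ := by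
    ext x
    simp only [Set.mem_inter_iff, Set.mem_iUnion, Set.mem_iInter, Set.mem_compl_iff,
      Finset.mem_univ, Set.mem_empty_iff_false, iff_false, not_and, forall_exists_index]
    intro i hi hall
    exact hall i trivial hi
  rw [this] at h2
  exact absurd h2 U.empty_not_mem

include htree in
lemma main_lemma {u : Set T} (hu : u ∈ U.carrier) :
    ∃ c ∈ CC U, ∃ F : Finset T, ↑F ⊆ immSucc (CC U) ∧ btree c F ⊆ u := by
  classical
  obtain ⟨ι, hι, f, F, rfl⟩ := treealg_NF htree _ (U.subset_alg hu)
  obtain ⟨i, hi⟩ := U_pigeonhole htree U _ (fun i => btree_mem_treealg _ _) hu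
  set t := f i with hti
  set F₀ := F i with hF₀
  have hpsub : btree t F₀ ⊆ ⋃ j, btree (f j) (F j) := Set.subset_iUnion_of_subset i (by rfl)
  have htC : t ∈ CC U := U.up_closed _ hi _ (gen_mem_of_mem _ ⟨t, rfl⟩)
    (fun x hx => (mem_btree.1 hx).1)
  have hsnotC : ∀ s ∈ F₀, s ∉ CC U := by
    intro s hs hsC
    have h2 := U.inter_mem _ hi _ hsC
    have : btree t F₀ ∩ Set.Ici s = ∅ := by
      ext x
      simp only [Set.mem_inter_iff, mem_btree, Set.mem_Ici, Set.mem_empty_iff_false, iff_false,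
        not_and]
      rintro ⟨-, h⟩ hsx
      exact h s hs hsx
    rw [this] at h2
    exact absurd h2 U.empty_not_mem
  -- split F₀
  set P : T → Prop := fun s => ∀ c ∈ CC U, c < s with hP
  set F₁ := F₀.filter (fun s => ¬ P s) with hF₁
  set F₂ := F₀.filter (fun s => P s) with hF₂
  -- for s ∈ F₂ : an immediate successor below s
  have himm : ∀ s ∈ F₂, ∃ a ∈ immSucc (CC U), a ≤ s := by
    intro s hs
    have hPs : P s := (Finset.mem_filter.1 hs).2
    have hwf := (htree s).2
    rw [Set.wellFoundedOn_iff] at hwf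
    obtain ⟨m, hm, hmin⟩ := hwf.has_min {x | x ≤ s ∧ ∀ c ∈ CC U, c < x} ⟨s, le_refl s, hPs⟩
    refine ⟨m, ⟨hm.2, fun s' hs' hs'm => ?_⟩, hm.1⟩
    by_contra hne
    exact hmin s' ⟨le_trans hs'm hm.1, hs'⟩ ⟨lt_of_le_of_ne hs'm hne, le_trans hs'm hm.1, hm.1⟩
  -- for s ∈ F₁ : an element of CC with disjoint cone
  have hdisj : ∀ s ∈ F₁, ∃ c ∈ CC U, Set.Ici c ∩ Set.Ici s = ∅ := by
    intro s hs
    have hnPs : ¬ (∀ c ∈ CC U, c < s) := by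
      simpa [hP] using (Finset.mem_filter.1 hs).2
    push_neg at hnPs
    obtain ⟨c, hcC, hcs⟩ := hnPs
    have hsF₀ : s ∈ F₀ := (Finset.mem_filter.1 hs).1
    have h1 : ¬ c ≤ s := by
      intro h
      have : c ≠ s := fun he => hsnotC s hsF₀ (he ▸ hcC)
      exact hcs (lt_of_le_of_ne h this)
    have h2 : ¬ s ≤ c := fun h => hsnotC s hsF₀ (CC_down U h hcC)
    exact ⟨c, hcC, tree_cones_disjoint htree h1 h2⟩
  -- choice functions
  set g : T → T := fun s => if h : ∃ a ∈ immSucc (CC U), a ≤ s then h.choose else ⊥ with hg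
  set k : T → T := fun s => if h : ∃ c ∈ CC U, Set.Ici c ∩ Set.Ici s = ∅ then h.choose else ⊥
    with hk
  have hgsp : ∀ s ∈ F₂, g s ∈ immSucc (CC U) ∧ g s ≤ s := by
    intro s hs
    have h := himm s hs
    rw [hg]; simp only [dif_pos h]
    exact ⟨h.choose_spec.1, h.choose_spec.2⟩
  have hksp : ∀ s ∈ F₁, k s ∈ CC U ∧ Set.Ici (k s) ∩ Set.Ici s = ∅ := by
    intro s hs
    have h := hdisj s hs
    rw [hk]; simp only [dif_pos h]
    exact ⟨h.choose_spec.1, h.choose_spec.2⟩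
  -- upper bound
  obtain ⟨c, hcC, hcub⟩ := CC_finset_ub htree U (insert t (F₁.image k)) (by
    intro x hx
    simp only [Finset.coe_insert, Set.mem_insert_iff, Finset.coe_image, Set.mem_image,
      Finset.mem_coe] at hx
    rcases hx with rfl | ⟨s, hs, rfl⟩
    · exact htC
    · exact (hksp s hs).1)
  refine ⟨c, hcC, F₂.image g, ?_, ?_⟩
  · intro x hx
    simp only [Finset.coe_image, Set.mem_image, Finset.mem_coe] at hx
    obtain ⟨s, hs, rfl⟩ := hx
    exact (hgsp s hs).1
  · intro x hx
    rw [mem_btree] at hx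
    obtain ⟨hcx, hforb⟩ := hx
    apply hpsub
    rw [mem_btree]
    constructor
    · exact le_trans (hcub t (Finset.mem_insert_self _ _)) hcx
    · intro s hs hsx
      by_cases hPs : P s
      · have hs2 : s ∈ F₂ := Finset.mem_filter.2 ⟨hs, hPs⟩
        exact hforb (g s) (Finset.mem_image_of_mem g hs2) (le_trans (hgsp s hs2).2 hsx)
      · have hs1 : s ∈ F₁ := Finset.mem_filter.2 ⟨hs, by simpa using hPs⟩
        have hkx : k s ≤ x := le_trans
          (hcub (k s) (Finset.mem_insert_of_mem (Finset.mem_image_of_mem k hs1))) hcx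
        have : x ∈ Set.Ici (k s) ∩ Set.Ici s := ⟨hkx, hsx⟩
        rw [(hksp s hs1).2] at this
        exact this

end Main
section Cof
variable {L : Type*} [PartialOrder L]

lemma setCof_spec (C : Set L) (hne : C.Nonempty) :
    ∃ D : Set L, D ⊆ C ∧ setCof C = #↥D ∧ (∀ x ∈ C, ∃ y ∈ D, x ≤ y) ∧ D.Nonempty := by
  have hmem : setCof C ∈ {c : Cardinal | ∃ D : Set L, D ⊆ C ∧ c = #↥D ∧ ∀ x ∈ C, ∃ y ∈ D, x ≤ y} := by
    apply csInf_mem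
    exact ⟨#↥C, C, subset_rfl, rfl, fun x hx => ⟨x, hx, le_rfl⟩⟩
  obtain ⟨D, hsub, hcard, hcof⟩ := hmem
  obtain ⟨x, hx⟩ := hne
  obtain ⟨y, hy, -⟩ := hcof x hx
  exact ⟨D, hsub, hcard, hcof, ⟨y, hy⟩⟩

lemma setCof_le_of_cofinal {C D : Set L} (hsub : D ⊆ C) (hcof : ∀ x ∈ C, ∃ y ∈ D, x ≤ y) :
    setCof C ≤ #↥D :=
  csInf_le' ⟨D, hsub, rfl, hcof⟩

lemma exists_good_e {C : Set L} (hch : IsChain (· ≤ ·) C) (hne : C.Nonempty) :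
    ∃ e : (setCof C).ord.ToType → L, (∀ o, e o ∈ C) ∧
      (∀ c ∈ C, ∃ o₀, ∀ o, o₀ ≤ o → c ≤ e o) ∧
      (∀ c ∈ C, ∃ o₀, ∀ o, e o ≤ c → o ≤ o₀) := by
  classical
  obtain ⟨D, hDC, hcard, hDcof, hDne⟩ := setCof_spec C hne
  set κ := setCof C with hκ
  by_cases hmax : ∃ m ∈ C, ∀ x ∈ C, x ≤ m
  · obtain ⟨m, hmC, hm⟩ := hmax
    have hκ1 : κ = 1 := by
      have hle : κ ≤ 1 := by
        have := setCof_le_of_cofinal (C := C) (D := {m}) (by simpa using hmC)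
          (fun x hx => ⟨m, rfl, hm x hx⟩)
        simpa using this
      have hge : 1 ≤ κ := by
        rw [hcard]
        rw [Cardinal.one_le_iff_ne_zero, Cardinal.mk_ne_zero_iff]
        exact Set.Nonempty.to_subtype hDne
      exact le_antisymm hle hge
    have hOne : #κ.ord.ToType = 1 := by rw [mk_ord_toType, hκ1]
    have hOnonempty : Nonempty κ.ord.ToType := by
      rw [← Cardinal.mk_ne_zero_iff, hOne]; exact one_ne_zero
    have hOsub : Subsingleton κ.ord.ToType := by
      rw [← Cardinal.le_one_iff_subsingleton, hOne]
    obtain ⟨o⟩ := hOnonempty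
    refine ⟨fun _ => m, fun _ => hmC, fun c hc => ⟨o, fun _ _ => hm c hc⟩,
      fun c hc => ⟨o, fun o' _ => ?_⟩⟩
    exact le_of_eq (Subsingleton.elim o' o)
  · -- no maximum; κ is infinite
    push_neg at hmax
    have hκinf : ℵ₀ ≤ κ := by
      by_contra hfin
      push_neg at hfin
      have hDfin : D.Finite := by
        rw [← Set.finite_coe_iff, ← Cardinal.lt_aleph0_iff_finite, ← hcard]; exact hfin
      obtain ⟨m, hmD, hmmax⟩ : ∃ m ∈ D, ∀ a ∈ D, m ≤ a → m = a := by
        obtain ⟨m, hm⟩ := Set.Finite.exists_maximal hDfin hDne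
        exact ⟨m, hm.1, fun a ha h => le_antisymm h (hm.2 ha h)⟩
      have hmub : ∀ a ∈ D, a ≤ m := by
        intro a ha
        rcases hch.total (hDC hmD) (hDC ha) with h | h
        · exact le_of_eq (hmmax a ha h).symm
        · exact h
      obtain ⟨x, hxC, hxm⟩ := hmax m (hDC hmD)
      obtain ⟨y, hyD, hxy⟩ := hDcof x hxC
      exact hxm (le_trans hxy (hmub y hyD))
    have hcardO : #κ.ord.ToType = #↥D := by rw [mk_ord_toType, ← hcard]
    obtain ⟨φ⟩ := Cardinal.eq.1 hcardO
    -- upper bounds for initial segments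
    have hub : ∀ o : κ.ord.ToType, ∃ x ∈ C, ∀ o' ≤ o, ((φ o').val : L) ≤ x := by
      intro o
      set S : Set L := Subtype.val '' (φ '' Set.Iic o) with hS
      have hSC : S ⊆ C := by
        rintro x ⟨⟨y, hy⟩, -, rfl⟩
        exact hDC hy
      have hScard : #↥S < κ := by
        have h1 : #↥S ≤ #(Set.Iic o) := by
          rw [hS]
          exact le_trans (Cardinal.mk_image_le) (Cardinal.mk_image_le)
        have h2 : #(Set.Iic o) < κ := by
          have : (Set.Iic o) = insert o (Set.Iio o) := by
            ext z; simp [le_iff_lt_or_eq, or_comm]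
          rw [this]
          refine lt_of_le_of_lt (Cardinal.mk_insert_le) ?_
          exact Cardinal.add_lt_of_lt hκinf (Cardinal.mk_Iio_ord_toType o)
            (lt_of_lt_of_le Cardinal.one_lt_aleph0 hκinf)
        exact lt_of_le_of_lt h1 h2
      by_cases hcof : ∀ x ∈ C, ∃ y ∈ S, x ≤ y
      · exact absurd (setCof_le_of_cofinal hSC hcof) (not_le_of_gt hScard)
      · push_neg at hcof
        obtain ⟨x, hxC, hx⟩ := hcof
        refine ⟨x, hxC, fun o' ho' => ?_⟩
        have hmem : ((φ o').val : L) ∈ S := ⟨φ o', Set.mem_image_of_mem _ ho', rfl⟩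
        rcases hch.total (hSC hmem) hxC with h | h
        · exact h
        · exact absurd h (hx _ hmem)
    choose e heC hemaj using hub
    refine ⟨e, heC, ?_, ?_⟩
    · intro c hc
      obtain ⟨d, hdD, hcd⟩ := hDcof c hc
      obtain ⟨o₀, ho₀⟩ : ∃ o₀, φ o₀ = ⟨d, hdD⟩ := ⟨φ.symm ⟨d, hdD⟩, φ.apply_symm_apply _⟩
      refine ⟨o₀, fun o ho => ?_⟩
      have := hemaj o o₀ ho
      rw [ho₀] at this
      exact le_trans hcd this
    · intro c hc
      obtain ⟨c', hc'C, hc'⟩ := hmax c hc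
      have hEV : ∃ o₀, ∀ o, o₀ ≤ o → c' ≤ e o := by
        obtain ⟨d, hdD, hcd⟩ := hDcof c' hc'C
        obtain ⟨o₀, ho₀⟩ : ∃ o₀, φ o₀ = ⟨d, hdD⟩ := ⟨φ.symm ⟨d, hdD⟩, φ.apply_symm_apply _⟩
        refine ⟨o₀, fun o ho => ?_⟩
        have := hemaj o o₀ ho
        rw [ho₀] at this
        exact le_trans hcd this
      obtain ⟨o₀, ho₀⟩ := hEV
      refine ⟨o₀, fun o heo => ?_⟩
      by_contra hle
      have : o₀ ≤ o := le_of_not_ge hle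
      exact hc' (le_trans (ho₀ o this) heo)

end Cof
section Tukey

lemma convergent_TukeyLE {P Q : Type*} [Preorder P] [Preorder Q] (f : P → Q)
    (h : ∀ q, ∃ p₀, ∀ p, p₀ ≤ p → q ≤ f p) : TukeyLE Q P := by
  refine ⟨f, fun X hX q => ?_⟩
  obtain ⟨p₀, hp₀⟩ := h q
  obtain ⟨x, hxX, hx⟩ := hX p₀
  exact ⟨f x, ⟨x, hxX, rfl⟩, hp₀ x hx⟩

lemma tukeymap_TukeyLE {P Q : Type*} [Preorder P] [Preorder Q] (g : P → Q)
    (h : ∀ q, ∃ b, ∀ p, g p ≤ q → p ≤ b) : TukeyLE P Q := by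
  choose f hf using h
  refine ⟨f, fun X hX p => ?_⟩
  obtain ⟨x, hxX, hgx⟩ := hX (g p)
  exact ⟨f x, ⟨x, hxX, rfl⟩, hf x p hgx⟩

lemma lt_ord_two_iff (o : Ordinal) : o < (2 : Cardinal).ord ↔ o ≤ 1 := by
  have h2 : (2 : Cardinal).ord = (2 : Ordinal) := by
    have h : ((2:ℕ):Cardinal).ord = ((2:ℕ):Ordinal) := Cardinal.ord_nat 2
    have e1 : ((2:ℕ):Cardinal) = (2:Cardinal) := by norm_cast
    have e2 : ((2:ℕ):Ordinal) = (2:Ordinal) := by norm_cast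
    rw [e1, e2] at h
    exact h
  have hs : (2 : Ordinal) = Order.succ 1 := by
    rw [← Ordinal.add_one_eq_succ]
    exact one_add_one_eq_two.symm
  rw [h2, hs, Order.lt_succ_iff]

lemma wp_le_iff {I : Type*} {κ : I → Cardinal} (w w' : WeakProd κ) :
    w ≤ w' ↔ ∀ i, w.val i ≤ w'.val i := Iff.rfl

end Tukey
/-- Let `T` be a tree with a least element, `U` an ultrafilter on
`Treealg T` with corresponding initial chain `C = {t : T↑t ∈ U}`, and `imm(C)` the set
of immediate successors of `C`.  Then
`(U,⊇) ≡_T (cf C × ∏^w_{β<|imm(C)|}{0,1}, ≤)`, where the weak product (indexed here by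
`imm(C)` itself) consists of finitely supported `{0,1}`-valued functions ordered
pointwise and the product is ordered coordinatewise. -/
theorem stmt12 {T : Type*} [PartialOrder T] [OrderBot T]
    (htree : ∀ t : T, IsChain (· ≤ ·) {s : T | s ≤ t} ∧
      {s : T | s ≤ t}.WellFoundedOn (· < ·))
    (U : SetUltrafilter (treealg T)) :
    TukeyEquiv ((↥U.carrier)ᵒᵈ)
      ((setCof {t : T | Set.Ici t ∈ U.carrier}).ord.ToType ×
        WeakProd (fun _ : ↥(immSucc {t : T | Set.Ici t ∈ U.carrier}) => 2)) := by
  classical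
  have hCCeq : {t : T | Set.Ici t ∈ U.carrier} = CC U := rfl
  rw [hCCeq]
  set I := ↥(immSucc (CC U)) with hI
  set O := (setCof (CC U)).ord.ToType with hO
  -- the initial chain
  have hch : IsChain (· ≤ ·) (CC U) := by
    intro a ha b hb _
    exact CC_chain htree U ha hb
  have hne : (CC U).Nonempty := ⟨⊥, bot_mem_CC U⟩
  obtain ⟨e, heC, hEV, hBD⟩ := exists_good_e hch hne
  -- support machinery
  set supp : WeakProd (fun _ : I => 2) → Finset I := fun w => w.2.2.toFinset with hsupp
  have mem_supp : ∀ (w : WeakProd (fun _ : I => 2)) (i : I), i ∈ supp w ↔ w.val i ≠ 0 := by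
    intro w i
    rw [hsupp]
    exact Set.Finite.mem_toFinset _
  set Fs : WeakProd (fun _ : I => 2) → Finset T := fun w => (supp w).image Subtype.val with hFs
  have hFsub : ∀ w, ↑(Fs w) ⊆ immSucc (CC U) := by
    intro w x hx
    rw [hFs] at hx
    simp only [Finset.coe_image, Set.mem_image, Finset.mem_coe] at hx
    obtain ⟨i, _, rfl⟩ := hx
    exact i.2
  -- values are ≤ 1
  have hval1 : ∀ (w : WeakProd (fun _ : I => 2)) (i : I), w.val i ≤ 1 := by
    intro w i
    exact (lt_ord_two_iff _).1 (w.2.1 i)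
  -- indicator elements
  have hwF : ∀ F' : Finset I, ∃ wF : WeakProd (fun _ : I => 2),
      (∀ i, wF.val i = if i ∈ F' then 1 else 0) := by
    intro F'
    refine ⟨⟨fun i => if i ∈ F' then 1 else 0, fun i => ?_, ?_⟩, fun i => rfl⟩
    · rw [lt_ord_two_iff]; by_cases h : i ∈ F' <;> simp [h]
    · apply Set.Finite.subset F'.finite_toSet
      intro i hi
      simp only [Set.mem_setOf_eq, ne_eq, ite_eq_right_iff, not_forall] at hi
      exact hi.1
  -- the map
  set f : O × WeakProd (fun _ : I => 2) → (↥U.carrier)ᵒᵈ := fun p =>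
    OrderDual.toDual ⟨btree (e p.1) (Fs p.2), btree_mem_U U (heC p.1) (hFsub p.2)⟩ with hf
  -- given F ⊆ immSucc as Finset T, build a Finset I
  have hlift : ∀ F : Finset T, ↑F ⊆ immSucc (CC U) → ∃ F' : Finset I,
      ∀ i : I, i ∈ F' ↔ (i : T) ∈ F := by
    intro F hF
    refine ⟨F.attach.image (fun x => (⟨x.1, hF (Finset.mem_coe.2 x.2)⟩ : I)), fun i => ?_⟩
    simp only [Finset.mem_image, Finset.mem_attach, true_and, Subtype.exists]
    constructor
    · rintro ⟨a, ha, h⟩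
      rw [← h]
      exact ha
    · intro hi
      exact ⟨(i : T), hi, Subtype.ext rfl⟩
  constructor
  · -- TukeyLE Uᵒᵈ (O × W) : via convergent f
    apply convergent_TukeyLE f
    intro q
    obtain ⟨c, hc, F, hF, hsubu⟩ := main_lemma htree U (OrderDual.ofDual q).2
    obtain ⟨o₀, ho₀⟩ := hEV c hc
    obtain ⟨F', hF'⟩ := hlift F hF
    obtain ⟨wF, hwFval⟩ := hwF F'
    refine ⟨(o₀, wF), ?_⟩
    rintro ⟨o, w⟩ hle
    rw [Prod.mk_le_mk] at hle
    -- goal : q ≤ f (o, w) in the dual, i.e. btree (e o) (Fs w) ⊆ q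
    show btree (e o) (Fs w) ⊆ (OrderDual.ofDual q).1
    have h1 : c ≤ e o := ho₀ o hle.1
    have h2 : F ⊆ Fs w := by
      intro x hx
      have hxI : (⟨x, hF (Finset.mem_coe.2 hx)⟩ : I) ∈ supp w := by
        rw [mem_supp]
        have := (wp_le_iff wF w).1 hle.2 ⟨x, hF (Finset.mem_coe.2 hx)⟩
        rw [hwFval, if_pos ((hF' _).2 hx)] at this
        intro h0
        rw [h0] at this
        exact absurd this (by simp)
      rw [hFs]
      exact Finset.mem_image_of_mem _ hxI
    exact subset_trans (btree_mono h1 h2) hsubu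
  · -- TukeyLE (O × W) Uᵒᵈ : via Tukey map f
    apply tukeymap_TukeyLE f
    intro q
    obtain ⟨c, hc, F, hF, hsubu⟩ := main_lemma htree U (OrderDual.ofDual q).2
    obtain ⟨o₀, ho₀⟩ := hBD c hc
    obtain ⟨F', hF'⟩ := hlift F hF
    obtain ⟨wF, hwFval⟩ := hwF F'
    refine ⟨(o₀, wF), ?_⟩
    rintro ⟨o, w⟩ hle
    -- hle : f (o,w) ≤ q in dual, i.e. q ⊆ btree (e o) (Fs w)
    have hle' : ((OrderDual.ofDual q : ↥U.carrier) : Set T) ⊆ btree (e o) (Fs w) := hle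
    rw [Prod.mk_le_mk]
    constructor
    · -- o ≤ o₀
      have hcmem : c ∈ btree (e o) (Fs w) :=
        hle' (hsubu (mem_btree_self U hc hF))
      exact ho₀ o (mem_btree.1 hcmem).1
    · -- w ≤ wF
      rw [wp_le_iff]
      intro i
      rw [hwFval]
      by_cases hiF : i ∈ F'
      · rw [if_pos hiF]; exact hval1 w i
      · rw [if_neg hiF]
        by_contra hne0
        have hne0' : w.val i ≠ 0 := by
          intro h; rw [h] at hne0; exact hne0 (le_refl _)
        have hiFs : (i : T) ∈ Fs w := by
          rw [hFs]
          exact Finset.mem_image_of_mem _ ((mem_supp w i).2 hne0')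
        have haF : (i : T) ∉ F := fun h => hiF ((hF' i).2 h)
        have hmem : (i : T) ∈ btree (e o) (Fs w) :=
          hle' (hsubu (mem_btree_imm U hc i.2 haF hF))
        exact (mem_btree.1 hmem).2 _ hiFs le_rfl
end
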